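/- A matrix A ∈ ℂ^{n×n} is G-Hamiltonian if and only if A is similar to -conj(A), i.e., there exists an invertible matrix M ∈ ℂ^{n×n} such that M⁻¹ A M = -conj(A). -/

import Mathlib

open Matrix Polynomial

noncomputable section GHamAux

namespace GHamAux

abbrev Qg (g : ℂ[X]) := ℂ[X] ⧸ (Submodule.span ℂ[X] {g} : Submodule ℂ[X] ℂ[X])

lemma modByMonic_eq_of_dvd_sub {g a b : ℂ[X]} (hg : g.Monic) (h : g ∣ a - b) :
    a %ₘ g = b %ₘ g := by
  have h0 : (a - b) %ₘ g = 0 := (modByMonic_eq_zero_iff_dvd hg).mpr h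
  have h1 : (a - b) %ₘ g = a %ₘ g - b %ₘ g := by
    have hneg : (-b) %ₘ g = -(b %ₘ g) := by
      have : -b = (-1 : ℂ) • b := by simp
      rw [this, smul_modByMonic]; simp
    rw [sub_eq_add_neg, add_modByMonic, hneg, sub_eq_add_neg]
  rw [h1] at h0
  exact sub_eq_zero.mp h0

/-- the raw bilinear form on the cyclic module ℂ[X]/(g) -/
def gam (g : ℂ[X]) (u v : Qg g) : ℂ :=
  ((u.out * v.out) %ₘ g).coeff (g.natDegree - 1)

lemma mk_out {g : ℂ[X]} (u : Qg g) : Submodule.Quotient.mk u.out = u := by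
  exact Quotient.out_eq u

lemma dvd_of_mk_eq {g : ℂ[X]} {a b : ℂ[X]}
    (h : (Submodule.Quotient.mk a : Qg g) = Submodule.Quotient.mk b) : g ∣ a - b := by
  rw [Submodule.Quotient.eq] at h
  rwa [← Ideal.mem_span_singleton]

lemma gam_mk {g : ℂ[X]} (hg : g.Monic) (q w : ℂ[X]) :
    gam g (Submodule.Quotient.mk q) (Submodule.Quotient.mk w)
      = ((q * w) %ₘ g).coeff (g.natDegree - 1) := by
  unfold gam
  congr 1
  apply modByMonic_eq_of_dvd_sub hg
  have hq : g ∣ (Submodule.Quotient.mk q : Qg g).out - q := dvd_of_mk_eq (by rw [mk_out])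
  have hw : g ∣ (Submodule.Quotient.mk w : Qg g).out - w := dvd_of_mk_eq (by rw [mk_out])
  have : (Submodule.Quotient.mk q : Qg g).out * (Submodule.Quotient.mk w : Qg g).out - q * w
      = ((Submodule.Quotient.mk q : Qg g).out - q) * (Submodule.Quotient.mk w : Qg g).out
        + q * ((Submodule.Quotient.mk w : Qg g).out - w) := by ring
  rw [this]
  exact dvd_add (Dvd.dvd.mul_right hq _) (Dvd.dvd.mul_left hw _)

lemma gam_comm {g : ℂ[X]} (u v : Qg g) : gam g u v = gam g v u := by
  unfold gam; rw [mul_comm]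

lemma gam_add_left {g : ℂ[X]} (hg : g.Monic) (u u' v : Qg g) :
    gam g (u + u') v = gam g u v + gam g u' v := by
  obtain ⟨q, rfl⟩ := Submodule.Quotient.mk_surjective _ u
  obtain ⟨q', rfl⟩ := Submodule.Quotient.mk_surjective _ u'
  obtain ⟨w, rfl⟩ := Submodule.Quotient.mk_surjective _ v
  rw [← Submodule.Quotient.mk_add, gam_mk hg, gam_mk hg, gam_mk hg, add_mul,
    add_modByMonic, coeff_add]

lemma gam_smul_left {g : ℂ[X]} (hg : g.Monic) (c : ℂ) (u v : Qg g) :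
    gam g (c • u) v = c * gam g u v := by
  obtain ⟨q, rfl⟩ := Submodule.Quotient.mk_surjective _ u
  obtain ⟨w, rfl⟩ := Submodule.Quotient.mk_surjective _ v
  rw [← Submodule.Quotient.mk_smul, gam_mk hg, gam_mk hg]
  rw [smul_mul_assoc, smul_modByMonic, coeff_smul, smul_eq_mul]

lemma gam_X_smul {g : ℂ[X]} (hg : g.Monic) (u v : Qg g) :
    gam g ((X : ℂ[X]) • u) v = gam g u ((X : ℂ[X]) • v) := by
  obtain ⟨q, rfl⟩ := Submodule.Quotient.mk_surjective _ u
  obtain ⟨w, rfl⟩ := Submodule.Quotient.mk_surjective _ v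
  rw [← Submodule.Quotient.mk_smul, ← Submodule.Quotient.mk_smul, gam_mk hg, gam_mk hg]
  congr 2
  simp [smul_eq_mul]; ring

lemma gam_zero_right {g : ℂ[X]} (hg : g.Monic) (u : Qg g) : gam g u 0 = 0 := by
  obtain ⟨q, rfl⟩ := Submodule.Quotient.mk_surjective _ u
  have : (0 : Qg g) = Submodule.Quotient.mk 0 := rfl
  rw [this, gam_mk hg]
  simp

lemma gam_nondeg {g : ℂ[X]} (hg : g.Monic) (u : Qg g)
    (h : ∀ v, gam g u v = 0) : u = 0 := by
  obtain ⟨q, rfl⟩ := Submodule.Quotient.mk_surjective _ u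
  rcases Nat.eq_zero_or_pos g.natDegree with hd | hd
  · -- g is a unit, quotient is trivial
    have hg1 : g = 1 := hg.natDegree_eq_zero.mp hd
    rw [Submodule.Quotient.mk_eq_zero]
    rw [hg1]
    apply Submodule.mem_span_singleton.mpr ⟨q, by simp⟩
  · set d := g.natDegree with hdd
    by_contra hne
    have hq0 : q %ₘ g ≠ 0 := by
      intro h0
      apply hne
      rw [Submodule.Quotient.mk_eq_zero]
      exact Ideal.mem_span_singleton.mpr ((modByMonic_eq_zero_iff_dvd hg).mp h0)
    set q' := q %ₘ g with hq'
    have hmk : (Submodule.Quotient.mk q : Qg g) = Submodule.Quotient.mk q' := by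
      rw [Submodule.Quotient.eq]
      apply Ideal.mem_span_singleton.mpr
      have := modByMonic_add_div q g
      -- q' + g * (q /ₘ g) = q  => q - q' = g * (q /ₘ g)
      exact ⟨q /ₘ g, by linear_combination -this⟩
    set m := q'.natDegree with hm
    have hmd : m < d := by
      have := degree_modByMonic_lt q hg
      rw [← hq'] at this
      have h2 := Polynomial.degree_eq_natDegree hq0
      rw [h2, Polynomial.degree_eq_natDegree hg.ne_zero] at this
      exact_mod_cast this
    have hkey := h (Submodule.Quotient.mk (X ^ (d - 1 - m)))
    rw [hmk, gam_mk hg] at hkey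
    have hdeg : (q' * X ^ (d - 1 - m)).degree < g.degree := by
      rcases eq_or_ne (q' * X ^ (d-1-m)) 0 with h0 | h0
      · rw [h0, degree_zero, degree_eq_natDegree hg.ne_zero]
        exact WithBot.bot_lt_coe _
      · rw [degree_eq_natDegree h0, degree_eq_natDegree hg.ne_zero]
        have : (q' * X ^ (d - 1 - m)).natDegree = m + (d - 1 - m) := by
          rw [natDegree_mul hq0 (pow_ne_zero _ X_ne_zero)]
          simp [hm]
        rw [this]
        exact_mod_cast (by omega : m + (d - 1 - m) < d)
    rw [(modByMonic_eq_self_iff hg).mpr hdeg] at hkey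
    have h3 := coeff_mul_X_pow q' (d - 1 - m) m
    rw [show m + (d - 1 - m) = g.natDegree - 1 from by omega] at h3
    rw [h3] at hkey
    exact hq0 (leadingCoeff_eq_zero.mp hkey)

section PiLevel

variable {ι : Type} [Fintype ι] [DecidableEq ι] (g : ι → ℂ[X])

/-- the assembled form on the product of cyclic modules -/
def beta (u v : ∀ i, Qg (g i)) : ℂ := ∑ i, gam (g i) (u i) (v i)

lemma beta_comm (u v : ∀ i, Qg (g i)) : beta g u v = beta g v u := by
  unfold beta; exact Finset.sum_congr rfl fun i _ => gam_comm _ _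

lemma beta_add_left (hg : ∀ i, (g i).Monic) (u u' v : ∀ i, Qg (g i)) :
    beta g (u + u') v = beta g u v + beta g u' v := by
  unfold beta
  rw [← Finset.sum_add_distrib]
  exact Finset.sum_congr rfl fun i _ => gam_add_left (hg i) _ _ _

lemma beta_smul_left (hg : ∀ i, (g i).Monic) (c : ℂ) (u v : ∀ i, Qg (g i)) :
    beta g (c • u) v = c * beta g u v := by
  unfold beta
  rw [Finset.mul_sum]
  exact Finset.sum_congr rfl fun i _ => gam_smul_left (hg i) _ _ _

lemma beta_X_smul (hg : ∀ i, (g i).Monic) (u v : ∀ i, Qg (g i)) :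
    beta g ((X : ℂ[X]) • u) v = beta g u ((X : ℂ[X]) • v) := by
  unfold beta
  exact Finset.sum_congr rfl fun i _ => gam_X_smul (hg i) _ _

lemma beta_nondeg (hg : ∀ i, (g i).Monic) (u : ∀ i, Qg (g i))
    (h : ∀ v, beta g u v = 0) : u = 0 := by
  funext i
  apply gam_nondeg (hg i)
  intro w
  have := h (Pi.single i w)
  unfold beta at this
  rw [Finset.sum_eq_single i] at this
  · rwa [Pi.single_eq_same] at this
  · intro j _ hj
    rw [Pi.single_eq_of_ne hj]
    exact gam_zero_right (hg j) _
  · intro hi; exact absurd (Finset.mem_univ i) hi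

end PiLevel

section GoodForm

theorem exists_good_form (n : ℕ) (A : Matrix (Fin n) (Fin n) ℂ) :
    ∃ b : (Fin n → ℂ) → (Fin n → ℂ) → ℂ,
      (∀ x y, b x y = b y x) ∧
      (∀ x x' y, b (x + x') y = b x y + b x' y) ∧
      (∀ (c : ℂ) x y, b (c • x) y = c * b x y) ∧
      (∀ x, (∀ y, b x y = 0) → x = 0) ∧
      (∀ x y, b (A.mulVec x) y = b x (A.mulVec y)) := by
  set φ := A.mulVecLin with hφ
  have htors : Module.IsTorsion ℂ[X] (Module.AEval' φ) := by
    intro x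
    refine ⟨⟨φ.charpoly, mem_nonZeroDivisors_of_ne_zero φ.charpoly_monic.ne_zero⟩, ?_⟩
    show (φ.charpoly : ℂ[X]) • x = 0
    apply (Module.AEval'.of φ).symm.injective
    rw [Module.AEval.of_symm_smul, LinearMap.aeval_self_charpoly]
    simp
  obtain ⟨ι, hfin, p, hp, e, ⟨E0⟩⟩ := Module.equiv_directSum_of_isTorsion htors
  classical
  set g : ι → ℂ[X] := fun i => (p i ^ e i) * C ((p i ^ e i).leadingCoeff)⁻¹ with hgdef
  have hne : ∀ i, p i ^ e i ≠ 0 := fun i => pow_ne_zero _ (hp i).ne_zero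
  have hg : ∀ i, (g i).Monic := fun i => monic_mul_leadingCoeff_inv (hne i)
  have hspan : ∀ i, (Submodule.span ℂ[X] {p i ^ e i} : Submodule ℂ[X] ℂ[X])
      = Submodule.span ℂ[X] {g i} := by
    intro i
    apply Ideal.span_singleton_eq_span_singleton.mpr
    have hu : IsUnit (C ((p i ^ e i).leadingCoeff)⁻¹) :=
      Polynomial.isUnit_C.mpr (IsUnit.inv (Ne.isUnit (leadingCoeff_ne_zero.mpr (hne i))))
    exact ⟨hu.unit, by rw [IsUnit.unit_spec]⟩
  set E : Module.AEval' φ ≃ₗ[ℂ[X]] (∀ i, Qg (g i)) :=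
    E0.trans ((DFinsupp.mapRange.linearEquiv
        (fun i => Submodule.quotEquivOfEq _ _ (hspan i))).trans
      (DirectSum.linearEquivFunOnFintype ℂ[X] ι _)) with hE
  set Ff : (Fin n → ℂ) → (∀ i, Qg (g i)) := fun x => E (Module.AEval'.of φ x) with hFf
  have hFadd : ∀ x x', Ff (x + x') = Ff x + Ff x' := by
    intro x x'; simp [hFf]
  have hCs : ∀ (c : ℂ) (u : ∀ i, Qg (g i)), (C c) • u = c • u := by
    intro c u
    funext i
    show (C c) • (u i) = c • (u i)
    obtain ⟨q, hq⟩ := Submodule.Quotient.mk_surjective _ (u i)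
    rw [← hq, ← Submodule.Quotient.mk_smul, ← Submodule.Quotient.mk_smul]
    congr 1
    rw [smul_eq_mul, Polynomial.smul_eq_C_mul]
  have hFsmul : ∀ (c : ℂ) x, Ff (c • x) = c • Ff x := by
    intro c x
    rw [← hCs c (Ff x)]
    show E (Module.AEval'.of φ (c • x)) = C c • E (Module.AEval'.of φ x)
    rw [← _root_.map_smul E]
    congr 1
    exact (LinearEquiv.map_smul (Module.AEval'.of φ) c x).trans
      (Module.AEval.C_smul φ c (Module.AEval'.of φ x)).symm
  have hFX : ∀ x, Ff (φ x) = (X : ℂ[X]) • Ff x := by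
    intro x
    show E (Module.AEval'.of φ (φ x)) = (X : ℂ[X]) • E (Module.AEval'.of φ x)
    rw [← _root_.map_smul E]
    congr 1
    exact (Module.AEval'.X_smul_of φ x).symm
  have hFsurj : Function.Surjective Ff := by
    intro v
    exact ⟨(Module.AEval'.of φ).symm (E.symm v), by simp [hFf]⟩
  have hFzero : ∀ x, Ff x = 0 → x = 0 := by
    intro x hx
    have h1 : Module.AEval'.of φ x = 0 := E.injective (by rw [map_zero]; exact hx)
    exact (Module.AEval'.of φ).map_eq_zero_iff.mp h1
  refine ⟨fun x y => beta g (Ff x) (Ff y), ?_, ?_, ?_, ?_, ?_⟩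
  · intro x y; exact beta_comm g _ _
  · intro x x' y; dsimp only; rw [hFadd]; exact beta_add_left g hg _ _ _
  · intro c x y; dsimp only; rw [hFsmul]; exact beta_smul_left g hg _ _ _
  · intro x hx
    apply hFzero
    apply beta_nondeg g hg
    intro v
    obtain ⟨y, rfl⟩ := hFsurj v
    exact hx y
  · intro x y
    have h1 : A.mulVec x = φ x := rfl
    have h2 : A.mulVec y = φ y := rfl
    dsimp only
    rw [h1, h2, hFX, hFX]
    exact beta_X_smul g hg _ _

end GoodForm

section Gram

theorem exists_unit_transpose_comm (n : ℕ) (B : Matrix (Fin n) (Fin n) ℂ) :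
    ∃ P : Matrix (Fin n) (Fin n) ℂ, IsUnit P ∧ Bᵀ * P = P * B := by
  obtain ⟨b, hcomm, hadd, hsmul, hnd, hcompat⟩ := exists_good_form n B
  have hzero : ∀ y, b 0 y = 0 := by
    intro y
    have := hsmul 0 0 y
    simpa using this
  have hsumexp : ∀ (s : Finset (Fin n)) (f : Fin n → (Fin n → ℂ)) (y : Fin n → ℂ),
      b (∑ i ∈ s, f i) y = ∑ i ∈ s, b (f i) y := by
    intro s
    induction s using Finset.induction_on with
    | empty => intro f y; simpa using hzero y
    | insert _ _ h ih =>
        intro f y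
        rw [Finset.sum_insert h, hadd, ih, Finset.sum_insert h]
  have hrep : ∀ x : Fin n → ℂ, x = ∑ i, x i • (Pi.single i 1 : Fin n → ℂ) := by
    intro x
    funext j
    rw [Finset.sum_apply]
    simp [Pi.single_apply]
  have hexp : ∀ (x y : Fin n → ℂ), b x y = ∑ i, x i * b (Pi.single i 1) y := by
    intro x y
    conv_lhs => rw [hrep x]
    rw [hsumexp]
    exact Finset.sum_congr rfl fun i _ => hsmul (x i) _ y
  have hexp' : ∀ (x y : Fin n → ℂ), b x y = ∑ j, y j * b x (Pi.single j 1) := by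
    intro x y
    rw [hcomm, hexp y x]
    exact Finset.sum_congr rfl fun j _ => by rw [hcomm]
  set H : Matrix (Fin n) (Fin n) ℂ :=
    Matrix.of (fun i j => b (Pi.single i 1) (Pi.single j 1)) with hH
  have hHapp : ∀ i j, H i j = b (Pi.single i 1) (Pi.single j 1) := fun i j => rfl
  have hcol : ∀ i : Fin n, B *ᵥ (Pi.single i 1) = fun k => B k i := by
    intro i
    funext k
    simp [Matrix.mulVec, dotProduct, Pi.single_apply]
  have hmain : Bᵀ * H = H * B := by
    ext i j
    rw [Matrix.mul_apply, Matrix.mul_apply]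
    have l1 : b (B *ᵥ (Pi.single i 1)) (Pi.single j 1)
        = ∑ k, B k i * H k j := by
      rw [hexp]
      refine Finset.sum_congr rfl fun k _ => ?_
      rw [hcol i, hHapp]
    have l2 : b (Pi.single i 1) (B *ᵥ (Pi.single j 1))
        = ∑ k, H i k * B k j := by
      rw [hexp']
      refine Finset.sum_congr rfl fun k _ => ?_
      rw [hcol j, hHapp]
      ring
    calc ∑ k, Bᵀ i k * H k j = ∑ k, B k i * H k j := by
          refine Finset.sum_congr rfl fun k _ => by rw [Matrix.transpose_apply]
      _ = b (B *ᵥ (Pi.single i 1)) (Pi.single j 1) := l1.symm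
      _ = b (Pi.single i 1) (B *ᵥ (Pi.single j 1)) := hcompat _ _
      _ = ∑ k, H i k * B k j := l2
  have hHu : IsUnit H := by
    rw [Matrix.isUnit_iff_isUnit_det, isUnit_iff_ne_zero]
    intro hdet
    have hdetT : Hᵀ.det = 0 := by rw [Matrix.det_transpose]; exact hdet
    obtain ⟨v, hv0, hv⟩ := (Matrix.exists_mulVec_eq_zero_iff).mpr hdetT
    apply hv0
    apply hnd
    intro y
    have hvj : ∀ j, b v (Pi.single j 1) = 0 := by
      intro j
      have := congrFun hv j
      rw [Matrix.mulVec, dotProduct] at this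
      rw [hexp]
      calc ∑ i, v i * b (Pi.single i 1) (Pi.single j 1)
          = ∑ i, Hᵀ j i * v i := by
            refine Finset.sum_congr rfl fun i _ => ?_
            rw [Matrix.transpose_apply, hHapp]; ring
        _ = 0 := this
    rw [hexp']
    refine Finset.sum_eq_zero fun j _ => ?_
    rw [hvj j, mul_zero]
  exact ⟨H, hHu, hmain⟩

end Gram

section Herm

lemma hermitianize (n : ℕ) (A S : Matrix (Fin n) (Fin n) ℂ)
    (hSu : IsUnit S) (hS : Aᴴ * S + S * A = 0) :
    ∃ G : Matrix (Fin n) (Fin n) ℂ, G.IsHermitian ∧ IsUnit G ∧ Aᴴ * G + G * A = 0 := by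
  have hS' : Aᴴ * Sᴴ + Sᴴ * A = 0 := by
    have := congrArg Matrix.conjTranspose hS
    rw [Matrix.conjTranspose_add, Matrix.conjTranspose_mul, Matrix.conjTranspose_mul,
      Matrix.conjTranspose_conjTranspose, Matrix.conjTranspose_zero] at this
    rw [add_comm] at this
    exact this
  set Mr : Matrix (Fin n) (Fin n) ℂ[X] :=
    Matrix.of (fun i j => (1 + C Complex.I * X) * C (S i j)
      + (1 - C Complex.I * X) * C (Sᴴ i j)) with hMr
  set r : ℂ[X] := Mr.det with hr
  have hdet : ∀ t : ℂ, ((1 + Complex.I * t) • S + (1 - Complex.I * t) • Sᴴ).det = r.eval t := by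
    intro t
    have h1 : r.eval t = (Mr.map (evalRingHom t)).det := by
      rw [hr]
      exact RingHom.map_det (evalRingHom t) Mr
    rw [h1]
    congr 1
    ext i j
    simp only [Matrix.map_apply, hMr, Matrix.of_apply, coe_evalRingHom, eval_add, eval_mul,
      eval_one, eval_sub, eval_C, eval_X, Matrix.add_apply, Matrix.smul_apply, smul_eq_mul]
  have hrne : r ≠ 0 := by
    intro h0
    have h1 := hdet Complex.I
    rw [h0, eval_zero] at h1
    have h2 : (1 : ℂ) + Complex.I * Complex.I = 0 := by
      rw [Complex.I_mul_I]; ring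
    have h3 : (1 : ℂ) - Complex.I * Complex.I = 2 := by
      rw [Complex.I_mul_I]; ring
    rw [h2, h3, zero_smul, zero_add, Matrix.det_smul, Matrix.det_conjTranspose] at h1
    have h4 : S.det ≠ 0 := ((Matrix.isUnit_iff_isUnit_det S).mp hSu).ne_zero
    have h5 : (starRingEnd ℂ) S.det ≠ 0 := by simpa using h4
    exact mul_ne_zero (pow_ne_zero _ two_ne_zero) h5 h1
  have hfinset : {t : ℝ | r.eval ((t : ℝ) : ℂ) = 0}.Finite := by
    have h1 : {x : ℂ | r.IsRoot x}.Finite := Polynomial.finite_setOf_isRoot hrne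
    have h2 : {t : ℝ | r.eval ((t : ℝ) : ℂ) = 0}
        ⊆ (fun t : ℝ => (t : ℂ)) ⁻¹' {x : ℂ | r.IsRoot x} := by
      intro t ht
      exact ht
    exact Set.Finite.subset (Set.Finite.preimage
      (Set.injOn_of_injective (fun a b h => by exact_mod_cast h)) h1) h2
  obtain ⟨t, ht⟩ := hfinset.infinite_compl.nonempty
  have htne : r.eval ((t : ℝ) : ℂ) ≠ 0 := ht
  set c : ℂ := 1 + Complex.I * (t : ℝ) with hc
  set c' : ℂ := 1 - Complex.I * (t : ℝ) with hc'
  have hstarc : star c = c' := by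
    rw [hc, hc']
    simp [Complex.ext_iff]
  have hstarc' : star c' = c := by
    rw [hc, hc']
    simp [Complex.ext_iff]
  refine ⟨c • S + c' • Sᴴ, ?_, ?_, ?_⟩
  · show (c • S + c' • Sᴴ)ᴴ = c • S + c' • Sᴴ
    rw [Matrix.conjTranspose_add, Matrix.conjTranspose_smul, Matrix.conjTranspose_smul,
      Matrix.conjTranspose_conjTranspose, hstarc, hstarc', add_comm]
  · rw [Matrix.isUnit_iff_isUnit_det, hdet ((t : ℝ) : ℂ)]
    exact isUnit_iff_ne_zero.mpr htne
  · calc Aᴴ * (c • S + c' • Sᴴ) + (c • S + c' • Sᴴ) * A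
        = c • (Aᴴ * S + S * A) + c' • (Aᴴ * Sᴴ + Sᴴ * A) := by
          rw [Matrix.mul_add, Matrix.add_mul, Matrix.mul_smul, Matrix.mul_smul,
            Matrix.smul_mul, Matrix.smul_mul, smul_add, smul_add]
          abel
      _ = 0 := by rw [hS, hS', smul_zero, smul_zero, add_zero]

end Herm

end GHamAux

end GHamAux

open GHamAux in
/-- A matrix `A ∈ ℂ^{n×n}` is G-Hamiltonian (i.e., there is a non-singular Hermitian `G`
with `A*G + GA = 0`) if and only if `A` is similar to `-conj(A)`. -/
theorem gHamiltonian_iff_similar_neg_conj (n : ℕ) (A : Matrix (Fin n) (Fin n) ℂ) :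
    (∃ G : Matrix (Fin n) (Fin n) ℂ, G.IsHermitian ∧ IsUnit G ∧ Aᴴ * G + G * A = 0) ↔
    (∃ M : Matrix (Fin n) (Fin n) ℂ, IsUnit M ∧
      M⁻¹ * A * M = -(A.map (starRingEnd ℂ))) := by
  set cA : Matrix (Fin n) (Fin n) ℂ := A.map (starRingEnd ℂ) with hcA
  have hT : (-cA)ᵀ = -Aᴴ := by
    ext i j
    simp [hcA, Matrix.conjTranspose_apply, Matrix.map_apply]
  obtain ⟨P, hPu, hPc⟩ := exists_unit_transpose_comm n (-cA)
  rw [hT] at hPc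
  -- hPc : -Aᴴ * P = P * (-cA), so Aᴴ * P = P * cA
  have hPc' : Aᴴ * P = P * cA := by
    have : -(Aᴴ * P) = -(P * cA) := by
      rw [← Matrix.neg_mul, ← Matrix.mul_neg]
      exact hPc
    exact neg_inj.mp this
  have hPdet : IsUnit P.det := (Matrix.isUnit_iff_isUnit_det P).mp hPu
  constructor
  · rintro ⟨G, hGh, hGu, hG⟩
    have hGdet : IsUnit G.det := (Matrix.isUnit_iff_isUnit_det G).mp hGu
    have hGAeq : G * A = -(Aᴴ * G) := by
      have := eq_neg_of_add_eq_zero_left hG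
      rw [this, neg_neg]
    have hGinv : IsUnit (G⁻¹) := isUnit_iff_exists.mpr
      ⟨G, Matrix.nonsing_inv_mul _ hGdet, Matrix.mul_nonsing_inv _ hGdet⟩
    refine ⟨G⁻¹ * P, hGinv.mul hPu, ?_⟩
    · have key : A * (G⁻¹ * P) = (G⁻¹ * P) * (-cA) := by
        have lhs : G * (A * (G⁻¹ * P)) = -(Aᴴ * P) := by
          calc G * (A * (G⁻¹ * P)) = (G * A) * (G⁻¹ * P) := by rw [Matrix.mul_assoc]
            _ = -(Aᴴ * G) * (G⁻¹ * P) := by rw [hGAeq]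
            _ = -(Aᴴ * (G * (G⁻¹ * P))) := by
                simp only [Matrix.neg_mul, Matrix.mul_assoc]
            _ = -(Aᴴ * P) := by rw [Matrix.mul_nonsing_inv_cancel_left _ _ hGdet]
        have rhs : G * ((G⁻¹ * P) * (-cA)) = -(Aᴴ * P) := by
          calc G * ((G⁻¹ * P) * (-cA)) = (G * (G⁻¹ * P)) * (-cA) := by
                simp only [Matrix.mul_assoc]
            _ = P * (-cA) := by rw [Matrix.mul_nonsing_inv_cancel_left _ _ hGdet]
            _ = -(P * cA) := by rw [Matrix.mul_neg]
            _ = -(Aᴴ * P) := by rw [hPc']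
        have := lhs.trans rhs.symm
        calc A * (G⁻¹ * P) = G⁻¹ * (G * (A * (G⁻¹ * P))) := by
              rw [Matrix.nonsing_inv_mul_cancel_left _ _ hGdet]
          _ = G⁻¹ * (G * ((G⁻¹ * P) * (-cA))) := by rw [this]
          _ = (G⁻¹ * P) * (-cA) := by rw [Matrix.nonsing_inv_mul_cancel_left _ _ hGdet]
      have hMdet' : IsUnit (G⁻¹ * P).det :=
        (Matrix.isUnit_iff_isUnit_det _).mp (hGinv.mul hPu)
      rw [Matrix.mul_assoc, key, ← Matrix.mul_assoc]
      rw [Matrix.nonsing_inv_mul _ hMdet', Matrix.one_mul]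
  · rintro ⟨M, hMu, hM⟩
    have hMdet : IsUnit M.det := (Matrix.isUnit_iff_isUnit_det M).mp hMu
    have hMinvA : M⁻¹ * A = (-cA) * M⁻¹ := by
      calc M⁻¹ * A = (M⁻¹ * A) * (M * M⁻¹) := by
            rw [Matrix.mul_nonsing_inv _ hMdet, Matrix.mul_one]
        _ = (M⁻¹ * A * M) * M⁻¹ := by simp only [Matrix.mul_assoc]
        _ = (-cA) * M⁻¹ := by rw [hM]
    have hMinv : IsUnit (M⁻¹) := isUnit_iff_exists.mpr
      ⟨M, Matrix.nonsing_inv_mul _ hMdet, Matrix.mul_nonsing_inv _ hMdet⟩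
    have hSu : IsUnit (P * M⁻¹) := hPu.mul hMinv
    apply hermitianize n A (P * M⁻¹) hSu
    have : (P * M⁻¹) * A = -(Aᴴ * (P * M⁻¹)) := by
      calc (P * M⁻¹) * A = P * (M⁻¹ * A) := by rw [Matrix.mul_assoc]
        _ = P * ((-cA) * M⁻¹) := by rw [hMinvA]
        _ = (P * (-cA)) * M⁻¹ := by rw [Matrix.mul_assoc]
        _ = (-(Aᴴ * P)) * M⁻¹ := by rw [Matrix.mul_neg, ← hPc', Matrix.neg_mul]
        _ = -(Aᴴ * (P * M⁻¹)) := by rw [Matrix.neg_mul, Matrix.mul_assoc]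
    rw [this]
    abel
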